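/- For m ≥ 2, the distinguishing index of the Mycielskian of the star K_{1,m} equals the minimum natural number r such that r² ≥ m + 1; in particular Dist′(μ(K_{1,m})) ≤ m = Dist′(K_{1,m}). -/

import Mathlib

open SimpleGraph

universe u

/-- A distinguishing edge coloring: no nontrivial automorphism preserves the coloring. -/
def IsDistEdgeColoring {V : Type u} (G : SimpleGraph V) {C : Type*} (c : G.edgeSet → C) : Prop :=
  ∀ φ : G ≃g G, (∀ e : G.edgeSet, c (φ.mapEdgeSet e) = c e) → ∀ v, φ v = v

/-- The distinguishing index: least number of colors in a distinguishing edge coloring. -/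
noncomputable def distIndex {V : Type u} (G : SimpleGraph V) : ℕ :=
  sInf {k : ℕ | ∃ c : G.edgeSet → Fin k, IsDistEdgeColoring G c}

/-- The star `K_{1,m}` with center `0`. -/
def starGraph (m : ℕ) : SimpleGraph (Fin (m + 1)) :=
  SimpleGraph.fromRel fun a _ => a = 0

/-- The Mycielskian: `Sum.inl a` are original vertices, `Sum.inr (Sum.inl a)` their
shadows, and `Sum.inr (Sum.inr _)` the root. -/
def myc {V : Type u} (G : SimpleGraph V) : SimpleGraph (V ⊕ V ⊕ PUnit.{u+1}) :=
  SimpleGraph.fromRel fun x y =>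
    match x, y with
    | Sum.inl a, Sum.inl b => G.Adj a b
    | Sum.inl a, Sum.inr (Sum.inl b) => G.Adj a b
    | Sum.inr (Sum.inl _), Sum.inr (Sum.inr _) => True
    | _, _ => False

/-- The generalized Mycielskian with `t` extra levels: `Sum.inl (j, a)` is the level-`j`
copy of vertex `a` (level `0` being the original vertices), and `Sum.inr _` is the root. -/
def genMyc {V : Type u} (G : SimpleGraph V) (t : ℕ) :
    SimpleGraph ((Fin (t + 1) × V) ⊕ PUnit.{u+1}) :=
  SimpleGraph.fromRel fun x y =>
    match x, y with
    | Sum.inl (j, a), Sum.inl (k, b) =>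
        ((j.val = 0 ∧ k.val = 0) ∨ k.val = j.val + 1) ∧ G.Adj a b
    | Sum.inl (j, _), Sum.inr _ => j.val = t
    | _, _ => False

namespace MycStar
variable {m : ℕ}
abbrev Vm (m : ℕ) := Fin (m+1) ⊕ Fin (m+1) ⊕ PUnit.{1}
abbrev vv (a : Fin (m+1)) : Vm m := Sum.inl a
abbrev uu (a : Fin (m+1)) : Vm m := Sum.inr (Sum.inl a)
abbrev ww : Vm m := Sum.inr (Sum.inr PUnit.unit)
abbrev M (m : ℕ) : SimpleGraph (Vm m) := myc (_root_.starGraph m)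
lemma star_adj {a b : Fin (m+1)} : (_root_.starGraph m).Adj a b ↔ a ≠ b ∧ (a = 0 ∨ b = 0) := by
  simp [_root_.starGraph, fromRel_adj]
lemma adj_vv_vv {a b : Fin (m+1)} : (M m).Adj (vv a) (vv b) ↔ a ≠ b ∧ (a = 0 ∨ b = 0) := by
  simp [M, myc, fromRel_adj, star_adj]; tauto
lemma adj_vv_uu {a b : Fin (m+1)} : (M m).Adj (vv a) (uu b) ↔ a ≠ b ∧ (a = 0 ∨ b = 0) := by
  simp [M, myc, fromRel_adj, star_adj]
lemma adj_uu_uu {a b : Fin (m+1)} : ¬ (M m).Adj (uu a) (uu b) := by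
  simp [M, myc, fromRel_adj]
lemma adj_uu_ww {a : Fin (m+1)} : (M m).Adj (uu a) ww := by
  simp [M, myc, fromRel_adj]
lemma adj_vv_ww {a : Fin (m+1)} : ¬ (M m).Adj (vv a) ww := by
  simp [M, myc, fromRel_adj]

/-- case analysis on vertices -/
lemma vert_cases (x : Vm m) : (∃ a, x = vv a) ∨ (∃ a, x = uu a) ∨ x = ww := by
  rcases x with a | a | a
  · exact Or.inl ⟨a, rfl⟩
  · exact Or.inr (Or.inl ⟨a, rfl⟩)
  · exact Or.inr (Or.inr rfl)

/-- neighbors of a non-central original vertex -/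
lemma nbr_vv {a : Fin (m+1)} (ha : a ≠ 0) {y : Vm m} (h : (M m).Adj (vv a) y) :
    y = vv 0 ∨ y = uu 0 := by
  rcases vert_cases y with ⟨b, rfl⟩ | ⟨b, rfl⟩ | rfl
  · rw [adj_vv_vv] at h; rcases h.2 with h0 | h0
    · exact absurd h0 ha
    · exact Or.inl (by rw [h0])
  · rw [adj_vv_uu] at h; rcases h.2 with h0 | h0
    · exact absurd h0 ha
    · exact Or.inr (by rw [h0])
  · exact absurd h adj_vv_ww

lemma nbr_uu {a : Fin (m+1)} (ha : a ≠ 0) {y : Vm m} (h : (M m).Adj (uu a) y) :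
    y = vv 0 ∨ y = ww := by
  rcases vert_cases y with ⟨b, rfl⟩ | ⟨b, rfl⟩ | rfl
  · rw [(M m).adj_comm, adj_vv_uu] at h; rcases h.2 with h0 | h0
    · exact Or.inl (by rw [h0])
    · exact absurd h0 ha
  · exact absurd h adj_uu_uu
  · exact Or.inr rfl

lemma nbr_ww {y : Vm m} (h : (M m).Adj ww y) : ∃ b, y = uu b := by
  rcases vert_cases y with ⟨b, rfl⟩ | ⟨b, rfl⟩ | rfl
  · exact absurd h.symm adj_vv_ww
  · exact ⟨b, rfl⟩
  · exact absurd h ((M m).irrefl)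

lemma nbr_uu0 {y : Vm m} (h : (M m).Adj (uu 0) y) : (∃ b, b ≠ 0 ∧ y = vv b) ∨ y = ww := by
  rcases vert_cases y with ⟨b, rfl⟩ | ⟨b, rfl⟩ | rfl
  · rw [(M m).adj_comm, adj_vv_uu] at h
    exact Or.inl ⟨b, h.1, rfl⟩
  · exact absurd h adj_uu_uu
  · exact Or.inr rfl

lemma nbr_vv0 {y : Vm m} (h : (M m).Adj (vv 0) y) :
    (∃ b, b ≠ 0 ∧ y = vv b) ∨ (∃ b, b ≠ 0 ∧ y = uu b) := by
  rcases vert_cases y with ⟨b, rfl⟩ | ⟨b, rfl⟩ | rfl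
  · rw [adj_vv_vv] at h
    exact Or.inl ⟨b, Ne.symm h.1, rfl⟩
  · rw [adj_vv_uu] at h
    exact Or.inr ⟨b, Ne.symm h.1, rfl⟩
  · exact absurd h adj_vv_ww

/-- "has at least 3 pairwise distinct neighbors" -/
def Big (x : Vm m) : Prop :=
  ∃ a b c : Vm m, a ≠ b ∧ a ≠ c ∧ b ≠ c ∧ (M m).Adj x a ∧ (M m).Adj x b ∧ (M m).Adj x c

lemma big_iff (hm : 2 ≤ m) (x : Vm m) : Big x ↔ x = vv 0 ∨ x = uu 0 ∨ x = ww := by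
  set a1 : Fin (m+1) := ⟨1, by omega⟩ with ha1
  set a2 : Fin (m+1) := ⟨2, by omega⟩ with ha2
  have h10 : a1 ≠ 0 := by simp [ha1, Fin.ext_iff]
  have h20 : a2 ≠ 0 := by simp [ha2, Fin.ext_iff]
  have h12 : a1 ≠ a2 := by simp [ha1, ha2, Fin.ext_iff]
  constructor
  · rintro ⟨a, b, c, hab, hac, hbc, hxa, hxb, hxc⟩
    rcases vert_cases x with ⟨d, rfl⟩ | ⟨d, rfl⟩ | rfl
    · left
      by_contra hd
      have hd0 : d ≠ 0 := fun h => hd (by rw [h])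
      rcases nbr_vv hd0 hxa with rfl|rfl <;> rcases nbr_vv hd0 hxb with rfl|rfl <;>
        rcases nbr_vv hd0 hxc with rfl|rfl <;> simp_all
    · right; left
      by_contra hd
      have hd0 : d ≠ 0 := fun h => hd (by rw [h])
      rcases nbr_uu hd0 hxa with rfl|rfl <;> rcases nbr_uu hd0 hxb with rfl|rfl <;>
        rcases nbr_uu hd0 hxc with rfl|rfl <;> simp_all
    · right; right; rfl
  · rintro (rfl | rfl | rfl)
    · exact ⟨vv a1, vv a2, uu a1, by simp [h12], by simp, by simp,
        adj_vv_vv.2 ⟨Ne.symm h10, Or.inl rfl⟩, adj_vv_vv.2 ⟨Ne.symm h20, Or.inl rfl⟩,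
        adj_vv_uu.2 ⟨Ne.symm h10, Or.inl rfl⟩⟩
    · exact ⟨vv a1, vv a2, ww, by simp [h12], by simp, by simp,
        ((M m).adj_comm _ _).1 (adj_vv_uu.2 ⟨h10, Or.inr rfl⟩),
        ((M m).adj_comm _ _).1 (adj_vv_uu.2 ⟨h20, Or.inr rfl⟩), adj_uu_ww⟩
    · exact ⟨uu 0, uu a1, uu a2, by simp [Ne.symm h10], by simp [Ne.symm h20], by simp [h12],
        ((M m).adj_comm _ _).1 adj_uu_ww, ((M m).adj_comm _ _).1 adj_uu_ww,
        ((M m).adj_comm _ _).1 adj_uu_ww⟩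

lemma big_map (φ : M m ≃g M m) {x : Vm m} (h : Big x) : Big (φ x) := by
  obtain ⟨a, b, c, hab, hac, hbc, hxa, hxb, hxc⟩ := h
  exact ⟨φ a, φ b, φ c, by simpa using hab, by simpa using hac, by simpa using hbc,
    φ.map_adj_iff.2 hxa, φ.map_adj_iff.2 hxb, φ.map_adj_iff.2 hxc⟩

lemma notbig_nbr_vv0 (hm : 2 ≤ m) (φ : M m ≃g M m) {y : Vm m} (hy : Big y)
    (h : (M m).Adj (vv 0) y) : False := by
  rcases (big_iff hm y).1 hy with rfl | rfl | rfl
  · exact (M m).irrefl h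
  · rcases nbr_vv0 h with ⟨b, hb, he⟩ | ⟨b, hb, he⟩ <;> simp_all
  · exact adj_vv_ww h

lemma fix_vv0 (hm : 2 ≤ m) (φ : M m ≃g M m) : φ (vv 0) = vv 0 := by
  have hbig : Big (φ (vv 0)) := big_map φ ((big_iff hm _).2 (Or.inl rfl))
  rcases (big_iff hm _).1 hbig with h | h | h
  · exact h
  · -- φ (vv 0) = uu 0, adjacent to ww
    exfalso
    have hadj : (M m).Adj (φ (vv 0)) ww := by rw [h]; exact adj_uu_ww
    have : (M m).Adj (vv 0) (φ.symm ww) := by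
      have := φ.symm.map_adj_iff.2 hadj
      simpa using this
    exact notbig_nbr_vv0 hm φ (big_map φ.symm ((big_iff hm _).2 (Or.inr (Or.inr rfl)))) this
  · exfalso
    have hadj : (M m).Adj (φ (vv 0)) (uu 0) := by rw [h]; exact SimpleGraph.Adj.symm adj_uu_ww
    have : (M m).Adj (vv 0) (φ.symm (uu 0)) := by
      have := φ.symm.map_adj_iff.2 hadj
      simpa using this
    exact notbig_nbr_vv0 hm φ (big_map φ.symm ((big_iff hm _).2 (Or.inr (Or.inl rfl)))) this

lemma fix_uw (hm : 2 ≤ m) (φ : M m ≃g M m) :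
    (φ (uu 0) = uu 0 ∧ φ ww = ww) ∨ (φ (uu 0) = ww ∧ φ ww = uu 0) := by
  have hv := fix_vv0 hm φ
  have hu : Big (φ (uu 0)) := big_map φ ((big_iff hm _).2 (Or.inr (Or.inl rfl)))
  have hw : Big (φ ww) := big_map φ ((big_iff hm _).2 (Or.inr (Or.inr rfl)))
  have hune : φ (uu 0) ≠ vv 0 := by
    rw [← hv]; intro h; exact absurd (φ.injective h) (by simp)
  have hwne : φ ww ≠ vv 0 := by
    rw [← hv]; intro h; exact absurd (φ.injective h) (by simp)
  have huw : φ (uu 0) ≠ φ ww := fun h => absurd (φ.injective h) (by simp)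
  rcases (big_iff hm _).1 hu with h1 | h1 | h1 <;> rcases (big_iff hm _).1 hw with h2 | h2 | h2 <;>
    simp_all

lemma caseA_vv (φ : M m ≃g M m) (hv : φ (vv 0) = vv 0) (hu : φ (uu 0) = uu 0)
    {a : Fin (m+1)} (ha : a ≠ 0) : ∃ b, b ≠ 0 ∧ φ (vv a) = vv b := by
  have h1 : (M m).Adj (φ (vv a)) (vv 0) := by
    rw [← hv]; exact φ.map_adj_iff.2 (adj_vv_vv.2 ⟨ha, Or.inr rfl⟩)
  have h2 : (M m).Adj (uu 0) (φ (vv a)) := by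
    rw [← hu]
    exact φ.map_adj_iff.2 (((M m).adj_comm _ _).1 (adj_vv_uu.2 ⟨ha, Or.inr rfl⟩))
  rcases nbr_uu0 h2 with ⟨b, hb, he⟩ | he
  · exact ⟨b, hb, he⟩
  · rw [he] at h1; exact absurd h1.symm adj_vv_ww

lemma caseA_uu (φ : M m ≃g M m) (hv : φ (vv 0) = vv 0) (hw : φ ww = ww)
    {a : Fin (m+1)} (ha : a ≠ 0) : ∃ b, b ≠ 0 ∧ φ (uu a) = uu b := by
  have h1 : (M m).Adj (vv 0) (φ (uu a)) := by
    rw [← hv]; exact φ.map_adj_iff.2 (adj_vv_uu.2 ⟨Ne.symm ha, Or.inl rfl⟩)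
  have h2 : (M m).Adj ww (φ (uu a)) := by
    rw [← hw]; exact φ.map_adj_iff.2 (SimpleGraph.Adj.symm adj_uu_ww)
  obtain ⟨b, hb⟩ := nbr_ww h2
  rw [hb, adj_vv_uu] at h1
  exact ⟨b, Ne.symm h1.1, hb⟩

lemma caseB_vv (φ : M m ≃g M m) (hv : φ (vv 0) = vv 0) (hu : φ (uu 0) = ww)
    {a : Fin (m+1)} (ha : a ≠ 0) : ∃ b, b ≠ 0 ∧ φ (vv a) = uu b := by
  have h1 : (M m).Adj (vv 0) (φ (vv a)) := by
    rw [← hv]; exact φ.map_adj_iff.2 ((adj_vv_vv.2 ⟨ha, Or.inr rfl⟩).symm)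
  have h2 : (M m).Adj ww (φ (vv a)) := by
    rw [← hu]
    exact φ.map_adj_iff.2 ((adj_vv_uu.2 ⟨ha, Or.inr rfl⟩).symm)
  obtain ⟨b, hb⟩ := nbr_ww h2
  rw [hb, adj_vv_uu] at h1
  exact ⟨b, Ne.symm h1.1, hb⟩

lemma caseB_uu (φ : M m ≃g M m) (hv : φ (vv 0) = vv 0) (hw : φ ww = uu 0)
    {a : Fin (m+1)} (ha : a ≠ 0) : ∃ b, b ≠ 0 ∧ φ (uu a) = vv b := by
  have h1 : (M m).Adj (vv 0) (φ (uu a)) := by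
    rw [← hv]; exact φ.map_adj_iff.2 (adj_vv_uu.2 ⟨Ne.symm ha, Or.inl rfl⟩)
  have h2 : (M m).Adj (uu 0) (φ (uu a)) := by
    rw [← hw]; exact φ.map_adj_iff.2 (SimpleGraph.Adj.symm adj_uu_ww)
  rcases nbr_uu0 h2 with ⟨b, hb, he⟩ | he
  · exact ⟨b, hb, he⟩
  · rw [he] at h1; exact absurd h1 adj_vv_ww


section Coloring

/-- pairs of colors indexed by naturals -/
def P {r : ℕ} (h : 0 < r) (n : ℕ) : Fin r × Fin r :=
  (⟨n / r % r, Nat.mod_lt _ h⟩, ⟨n % r, Nat.mod_lt _ h⟩)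

lemma P_inj {r : ℕ} (h : 0 < r) {n n' : ℕ} (hn : n < r * r) (hn' : n' < r * r)
    (he : P h n = P h n') : n = n' := by
  have h1 : n / r < r := Nat.div_lt_iff_lt_mul h |>.2 (by omega)
  have h1' : n' / r < r := Nat.div_lt_iff_lt_mul h |>.2 (by omega)
  have e1 : n / r = n' / r := by
    have := congrArg (fun p => (p.1 : Fin r).val) he
    simpa [P, Nat.mod_eq_of_lt h1, Nat.mod_eq_of_lt h1'] using this
  have e2 : n % r = n' % r := by
    have := congrArg (fun p => (p.2 : Fin r).val) he
    simpa [P] using this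
  have d1 := Nat.div_add_mod n r
  have d2 := Nat.div_add_mod n' r
  rw [e1] at d1
  omega

variable {m : ℕ}

/-- symmetric color function on pairs of vertices of the Mycielskian of the star -/
def colf {r : ℕ} (h : 0 < r) : Vm m → Vm m → Fin r
  | Sum.inl a, Sum.inl b =>
      if a = 0 then (P h (b.val - 1)).1 else if b = 0 then (P h (a.val - 1)).1 else ⟨0, h⟩
  | Sum.inl a, Sum.inr (Sum.inl b) =>
      if a = 0 then (P h b.val).1 else (P h (a.val - 1)).2
  | Sum.inr (Sum.inl b), Sum.inl a =>
      if a = 0 then (P h b.val).1 else (P h (a.val - 1)).2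
  | Sum.inr (Sum.inl b), Sum.inr (Sum.inr _) => (P h b.val).2
  | Sum.inr (Sum.inr _), Sum.inr (Sum.inl b) => (P h b.val).2
  | _, _ => ⟨0, h⟩

lemma colf_symm {r : ℕ} (h : 0 < r) (x y : Vm m) : colf h x y = colf h y x := by
  rcases x with a | a | a <;> rcases y with b | b | b <;> simp [colf]
  by_cases ha : a = 0 <;> by_cases hb : b = 0 <;> simp [ha, hb]

/-- the coloring of the Mycielskian of the star -/
def mcol {r : ℕ} (h : 0 < r) (e : (M m).edgeSet) : Fin r :=
  Sym2.lift ⟨colf h, colf_symm h⟩ e.val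

lemma mcol_mk {r : ℕ} (h : 0 < r) {x y : Vm m} (hxy : s(x, y) ∈ (M m).edgeSet) :
    mcol h ⟨s(x, y), hxy⟩ = colf h x y := rfl

/-- colors only depend on the underlying edge -/
lemma ccongr {α : Type*} {W : Type*} {G : SimpleGraph W} (c : G.edgeSet → α)
    {e e' : G.edgeSet} (h : e.val = e'.val) : c e = c e' := by
  cases e; cases e'; cases Subtype.ext h; rfl

/-- color preservation on a single edge, unfolded -/
lemma pres_pair {α : Type*} {W : Type*} {G : SimpleGraph W} {c : G.edgeSet → α}
    {φ : G ≃g G} (hc : ∀ e : G.edgeSet, c (φ.mapEdgeSet e) = c e)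
    {x y : W} (h : G.Adj x y) (h2 : G.Adj (φ x) (φ y)) :
    c ⟨s(φ x, φ y), h2⟩ = c ⟨s(x, y), h⟩ := by
  have := hc ⟨s(x, y), h⟩
  rw [← this]
  exact ccongr c (by simp [Iso.mapEdgeSet, Hom.mapEdgeSet])

end Coloring

variable {m : ℕ}

lemma pres_val {r : ℕ} (h0 : 0 < r) {φ : M m ≃g M m}
    (hc : ∀ e, mcol h0 (φ.mapEdgeSet e) = mcol h0 e) {x y x' y' : Vm m}
    (h : (M m).Adj x y) (hx : φ x = x') (hy : φ y = y') (h2 : (M m).Adj x' y') :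
    colf h0 x' y' = colf h0 x y := by
  have h2' : (M m).Adj (φ x) (φ y) := by rw [hx, hy]; exact h2
  have hp := pres_pair hc h h2'
  change colf h0 (φ x) (φ y) = colf h0 x y at hp
  rw [hx, hy] at hp
  exact hp

lemma myc_upper (hm : 2 ≤ m) {r : ℕ} (hr : m + 1 ≤ r * r) :
    ∃ c : (M m).edgeSet → Fin r, IsDistEdgeColoring (M m) c := by
  have h0 : 0 < r := by
    rcases Nat.eq_zero_or_pos r with h | h
    · subst h; omega
    · exact h
  refine ⟨mcol h0, ?_⟩
  intro φ hc
  have hv := fix_vv0 hm φ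
  rcases fix_uw hm φ with ⟨hu, hw⟩ | ⟨hu, hw⟩
  · -- identity case
    intro v
    rcases vert_cases v with ⟨a, rfl⟩ | ⟨a, rfl⟩ | rfl
    · by_cases ha : a = 0
      · rw [ha]; exact hv
      obtain ⟨b, hb, he⟩ := caseA_vv φ hv hu ha
      have e1 : colf h0 (vv 0) (vv b) = colf h0 (vv 0) (vv a) :=
        pres_val h0 hc (adj_vv_vv.2 ⟨Ne.symm ha, Or.inl rfl⟩) hv he
          (adj_vv_vv.2 ⟨Ne.symm hb, Or.inl rfl⟩)
      have e2 : colf h0 (uu 0) (vv b) = colf h0 (uu 0) (vv a) :=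
        pres_val h0 hc ((adj_vv_uu.2 ⟨ha, Or.inr rfl⟩).symm) hu he
          ((adj_vv_uu.2 ⟨hb, Or.inr rfl⟩).symm)
      simp only [colf, if_pos rfl, if_neg ha, if_neg hb] at e1 e2
      have hP : P h0 (b.val - 1) = P h0 (a.val - 1) := Prod.ext e1 e2
      have hab : b.val - 1 = a.val - 1 := P_inj h0 (by omega) (by omega) hP
      have ha' : a.val ≠ 0 := fun hh => ha (Fin.ext hh)
      have hb' : b.val ≠ 0 := fun hh => hb (Fin.ext hh)
      rw [he]
      congr 1
      exact Fin.ext (by omega)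
    · by_cases ha : a = 0
      · rw [ha]; exact hu
      obtain ⟨b, hb, he⟩ := caseA_uu φ hv hw ha
      have e1 : colf h0 (vv 0) (uu b) = colf h0 (vv 0) (uu a) :=
        pres_val h0 hc (adj_vv_uu.2 ⟨Ne.symm ha, Or.inl rfl⟩) hv he
          (adj_vv_uu.2 ⟨Ne.symm hb, Or.inl rfl⟩)
      have e2 : colf h0 (uu b) ww = colf h0 (uu a) ww :=
        pres_val h0 hc adj_uu_ww he hw adj_uu_ww
      simp only [colf, if_pos rfl] at e1 e2
      have hP : P h0 b.val = P h0 a.val := Prod.ext e1 e2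
      have hab : b.val = a.val := P_inj h0 (by omega) (by omega) hP
      rw [he]
      congr 1
      exact Fin.ext hab
    · exact hw
  · -- swap case: contradiction
    exfalso
    have hmlt : m < m + 1 := by omega
    set am : Fin (m+1) := ⟨m, hmlt⟩ with ham
    have ham0 : am ≠ 0 := by simp [ham, Fin.ext_iff]; omega
    obtain ⟨b, hb, he⟩ := caseB_uu φ hv hw ham0
    have e1 : colf h0 (vv 0) (vv b) = colf h0 (vv 0) (uu am) :=
      pres_val h0 hc (adj_vv_uu.2 ⟨Ne.symm ham0, Or.inl rfl⟩) hv he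
        (adj_vv_vv.2 ⟨Ne.symm hb, Or.inl rfl⟩)
    have e2 : colf h0 (vv b) (uu 0) = colf h0 (uu am) ww :=
      pres_val h0 hc adj_uu_ww he hw ((adj_vv_uu.2 ⟨hb, Or.inr rfl⟩))
    simp only [colf, if_pos rfl, if_neg hb] at e1 e2
    have hP : P h0 (b.val - 1) = P h0 am.val := Prod.ext e1 e2
    have hab : b.val - 1 = am.val := P_inj h0 (by omega) (by omega) hP
    have hb' : b.val ≠ 0 := fun hh => hb (Fin.ext hh)
    have : b.val ≤ m := by omega
    simp [ham] at hab
    omega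


lemma csw {α : Type*} {W : Type*} {G : SimpleGraph W} (c : G.edgeSet → α)
    {x y : W} (h : s(x,y) ∈ G.edgeSet) (h' : s(y,x) ∈ G.edgeSet) :
    c ⟨s(x,y), h⟩ = c ⟨s(y,x), h'⟩ :=
  ccongr c (Sym2.eq_swap)

lemma check_pres {α : Type*} {W : Type*} {G : SimpleGraph W} (c : G.edgeSet → α) (φ : G ≃g G)
    (H : ∀ x y (h : G.Adj x y), c ⟨s(φ x, φ y), (φ.map_adj_iff.2 h : G.Adj _ _)⟩ = c ⟨s(x,y), h⟩) :
    ∀ e : G.edgeSet, c (φ.mapEdgeSet e) = c e := by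
  rintro ⟨z, hz⟩
  induction z using Sym2.ind with
  | _ x y =>
    have hadj : G.Adj x y := hz
    have := H x y hadj
    rw [← this]
    exact ccongr c (by simp [Iso.mapEdgeSet, Hom.mapEdgeSet])

lemma swap_zero_iff {a b x : Fin (m+1)} (ha : a ≠ 0) (hb : b ≠ 0) :
    Equiv.swap a b x = 0 ↔ x = 0 := by
  constructor
  · intro h
    by_cases hxa : x = a
    · rw [hxa, Equiv.swap_apply_left] at h; exact absurd h hb
    by_cases hxb : x = b
    · rw [hxb, Equiv.swap_apply_right] at h; exact absurd h ha
    · rwa [Equiv.swap_apply_of_ne_of_ne hxa hxb] at h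
  · rintro rfl
    exact Equiv.swap_apply_of_ne_of_ne (Ne.symm ha) (Ne.symm hb)

lemma adj_uu_vv {a b : Fin (m+1)} : (M m).Adj (uu a) (vv b) ↔ b ≠ a ∧ (b = 0 ∨ a = 0) :=
  ⟨fun h => adj_vv_uu.1 h.symm, fun h => (adj_vv_uu.2 h).symm⟩

lemma swap_cond {a b : Fin (m+1)} (ha : a ≠ 0) (hb : b ≠ 0) (x y : Fin (m+1)) :
    (Equiv.swap a b x ≠ y ∧ (Equiv.swap a b x = 0 ∨ y = 0)) ↔ (x ≠ y ∧ (x = 0 ∨ y = 0)) := by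
  by_cases hx : x = 0
  · subst hx
    rw [Equiv.swap_apply_of_ne_of_ne (Ne.symm ha) (Ne.symm hb)]
  by_cases hy : y = 0
  · subst hy
    constructor
    · rintro ⟨h1, _⟩
      exact ⟨hx, Or.inr rfl⟩
    · rintro ⟨h1, _⟩
      exact ⟨fun he => hx ((swap_zero_iff ha hb).1 he), Or.inr rfl⟩
  · constructor
    · rintro ⟨h1, h2 | h2⟩
      · exact absurd ((swap_zero_iff ha hb).1 h2) hx
      · exact absurd h2 hy
    · rintro ⟨h1, h2 | h2⟩
      · exact absurd h2 hx
      · exact absurd h2 hy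

lemma swap_cond' {a b : Fin (m+1)} (ha : a ≠ 0) (hb : b ≠ 0) (x y : Fin (m+1)) :
    (y ≠ Equiv.swap a b x ∧ (y = 0 ∨ Equiv.swap a b x = 0)) ↔ (y ≠ x ∧ (y = 0 ∨ x = 0)) := by
  have := swap_cond ha hb x y
  tauto

/-- the automorphism swapping `vv a` and `vv b` -/
def vSwap {a b : Fin (m+1)} (ha : a ≠ 0) (hb : b ≠ 0) : M m ≃g M m where
  toEquiv := Equiv.sumCongr (Equiv.swap a b) (Equiv.refl _)
  map_rel_iff' := by
    intro x y
    rcases x with x | x <;> rcases y with y | y <;>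
      simp only [Equiv.sumCongr_apply, Sum.map_inl, Sum.map_inr, Equiv.refl_apply, id]
    · rw [adj_vv_vv, adj_vv_vv, swap_zero_iff ha hb, ne_eq, EmbeddingLike.apply_eq_iff_eq,
        swap_zero_iff ha hb]
    · rcases y with y | y
      · show (M m).Adj (vv _) (uu y) ↔ (M m).Adj (vv x) (uu y)
        rw [adj_vv_uu, adj_vv_uu]
        exact swap_cond ha hb x y
      · show (M m).Adj (vv _) ww ↔ (M m).Adj (vv x) ww
        simp [adj_vv_ww]
    · rcases x with x | x
      · show (M m).Adj (uu x) (vv _) ↔ (M m).Adj (uu x) (vv y)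
        rw [adj_uu_vv, adj_uu_vv]
        exact swap_cond ha hb y x
      · show (M m).Adj ww (vv _) ↔ (M m).Adj ww (vv y)
        constructor <;> (intro h; exact absurd h.symm adj_vv_ww)

/-- the automorphism swapping `uu a` and `uu b` -/
def uSwap {a b : Fin (m+1)} (ha : a ≠ 0) (hb : b ≠ 0) : M m ≃g M m where
  toEquiv := Equiv.sumCongr (Equiv.refl _) (Equiv.sumCongr (Equiv.swap a b) (Equiv.refl _))
  map_rel_iff' := by
    intro x y
    rcases x with x | x | x <;> rcases y with y | y | y <;>
      simp only [Equiv.sumCongr_apply, Sum.map_inl, Sum.map_inr, Equiv.refl_apply, id]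
    · show (M m).Adj (vv x) (uu _) ↔ (M m).Adj (vv x) (uu y)
      rw [adj_vv_uu, adj_vv_uu]
      exact swap_cond' ha hb y x
    · show (M m).Adj (uu _) (vv y) ↔ (M m).Adj (uu x) (vv y)
      rw [adj_uu_vv, adj_uu_vv]
      exact swap_cond' ha hb x y
    · show (M m).Adj (uu _) (uu _) ↔ (M m).Adj (uu x) (uu y)
      simp [M, myc, fromRel_adj]
    · show (M m).Adj (uu _) ww ↔ (M m).Adj (uu x) ww
      exact iff_of_true adj_uu_ww adj_uu_ww
    · show (M m).Adj ww (uu _) ↔ (M m).Adj ww (uu y)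
      exact iff_of_true (SimpleGraph.Adj.symm adj_uu_ww) (SimpleGraph.Adj.symm adj_uu_ww)


lemma edge_rep {x y : Vm m} (h : (M m).Adj x y) :
    (∃ a, a ≠ 0 ∧ s(x,y) = s(vv 0, vv a)) ∨ (∃ a, a ≠ 0 ∧ s(x,y) = s(uu 0, vv a)) ∨
    (∃ a, a ≠ 0 ∧ s(x,y) = s(vv 0, uu a)) ∨ (∃ a, s(x,y) = s(ww, uu a)) := by
  rcases x with a | a | a <;> rcases y with b | b | b
  · rw [adj_vv_vv] at h
    rcases h.2 with h0 | h0
    · exact Or.inl ⟨b, fun hb => h.1 (h0.trans hb.symm), by rw [h0]⟩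
    · exact Or.inl ⟨a, fun ha => h.1 (ha.trans h0.symm), by rw [h0, Sym2.eq_swap]⟩
  · rw [adj_vv_uu] at h
    rcases h.2 with h0 | h0
    · exact Or.inr (Or.inr (Or.inl ⟨b, fun hb => h.1 (h0.trans hb.symm), by rw [h0]⟩))
    · exact Or.inr (Or.inl ⟨a, fun ha => h.1 (ha.trans h0.symm), by rw [h0, Sym2.eq_swap]⟩)
  · exact absurd h adj_vv_ww
  · rw [adj_uu_vv] at h
    rcases h.2 with h0 | h0
    · exact Or.inr (Or.inr (Or.inl ⟨a, fun ha => h.1 (h0.trans ha.symm), by rw [h0, Sym2.eq_swap]⟩))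
    · exact Or.inr (Or.inl ⟨b, fun hb => h.1 (hb.trans h0.symm), by rw [h0]⟩)
  · exact absurd h adj_uu_uu
  · exact Or.inr (Or.inr (Or.inr ⟨a, Sym2.eq_swap⟩))
  · exact absurd h.symm adj_vv_ww
  · exact Or.inr (Or.inr (Or.inr ⟨b, rfl⟩))
  · exact absurd h ((M m).irrefl)

lemma adj_of_ne {a : Fin (m+1)} (ha : a ≠ 0) : (M m).Adj (vv 0) (vv a) :=
  adj_vv_vv.2 ⟨Ne.symm ha, Or.inl rfl⟩
lemma adj_of_ne' {a : Fin (m+1)} (ha : a ≠ 0) : (M m).Adj (uu 0) (vv a) :=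
  (adj_vv_uu.2 ⟨ha, Or.inr rfl⟩).symm
lemma adj_of_ne'' {a : Fin (m+1)} (ha : a ≠ 0) : (M m).Adj (vv 0) (uu a) :=
  adj_vv_uu.2 ⟨Ne.symm ha, Or.inl rfl⟩
lemma adj_w (a : Fin (m+1)) : (M m).Adj ww (uu a) :=
  SimpleGraph.Adj.symm adj_uu_ww

lemma check_pres' {α : Type*} (c : (M m).edgeSet → α) (φ : M m ≃g M m)
    (H1 : ∀ (a : Fin (m+1)) (ha : a ≠ 0) (h : s(φ (vv 0), φ (vv a)) ∈ (M m).edgeSet),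
      c ⟨s(φ (vv 0), φ (vv a)), h⟩ = c ⟨s(vv 0, vv a), adj_of_ne ha⟩)
    (H2 : ∀ (a : Fin (m+1)) (ha : a ≠ 0) (h : s(φ (uu 0), φ (vv a)) ∈ (M m).edgeSet),
      c ⟨s(φ (uu 0), φ (vv a)), h⟩ = c ⟨s(uu 0, vv a), adj_of_ne' ha⟩)
    (H3 : ∀ (a : Fin (m+1)) (ha : a ≠ 0) (h : s(φ (vv 0), φ (uu a)) ∈ (M m).edgeSet),
      c ⟨s(φ (vv 0), φ (uu a)), h⟩ = c ⟨s(vv 0, uu a), adj_of_ne'' ha⟩)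
    (H4 : ∀ (a : Fin (m+1)) (h : s(φ ww, φ (uu a)) ∈ (M m).edgeSet),
      c ⟨s(φ ww, φ (uu a)), h⟩ = c ⟨s(ww, uu a), adj_w a⟩) :
    ∀ e : (M m).edgeSet, c (φ.mapEdgeSet e) = c e := by
  rintro ⟨z, hz⟩
  induction z using Sym2.ind with
  | _ x y =>
    have hadj : (M m).Adj x y := hz
    rcases edge_rep hadj with ⟨a, ha, he⟩ | ⟨a, ha, he⟩ | ⟨a, ha, he⟩ | ⟨a, he⟩
    · rw [ccongr c (show ((φ.mapEdgeSet ⟨s(x,y), hz⟩) : (M m).edgeSet).val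
          = s(φ (vv 0), φ (vv a)) from by simp [Iso.mapEdgeSet, Hom.mapEdgeSet, he])
          (e' := ⟨_, φ.map_adj_iff.2 (adj_of_ne ha)⟩),
        ccongr c (e := ⟨s(x,y), hz⟩) (e' := ⟨_, adj_of_ne ha⟩) he]
      exact H1 a ha _
    · rw [ccongr c (show ((φ.mapEdgeSet ⟨s(x,y), hz⟩) : (M m).edgeSet).val
          = s(φ (uu 0), φ (vv a)) from by simp [Iso.mapEdgeSet, Hom.mapEdgeSet, he])
          (e' := ⟨_, φ.map_adj_iff.2 (adj_of_ne' ha)⟩),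
        ccongr c (e := ⟨s(x,y), hz⟩) (e' := ⟨_, adj_of_ne' ha⟩) he]
      exact H2 a ha _
    · rw [ccongr c (show ((φ.mapEdgeSet ⟨s(x,y), hz⟩) : (M m).edgeSet).val
          = s(φ (vv 0), φ (uu a)) from by simp [Iso.mapEdgeSet, Hom.mapEdgeSet, he])
          (e' := ⟨_, φ.map_adj_iff.2 (adj_of_ne'' ha)⟩),
        ccongr c (e := ⟨s(x,y), hz⟩) (e' := ⟨_, adj_of_ne'' ha⟩) he]
      exact H3 a ha _
    · rw [ccongr c (show ((φ.mapEdgeSet ⟨s(x,y), hz⟩) : (M m).edgeSet).val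
          = s(φ ww, φ (uu a)) from by simp [Iso.mapEdgeSet, Hom.mapEdgeSet, he])
          (e' := ⟨_, φ.map_adj_iff.2 (adj_w a)⟩),
        ccongr c (e := ⟨s(x,y), hz⟩) (e' := ⟨_, adj_w a⟩) he]
      exact H4 a _


/-- the level-swapping map -/
def crossFun (σ τ : Fin (m+1) → Fin (m+1)) : Vm m → Vm m
  | Sum.inl a => if a = 0 then Sum.inl 0 else Sum.inr (Sum.inl (σ a))
  | Sum.inr (Sum.inl a) => if a = 0 then Sum.inr (Sum.inr PUnit.unit) else Sum.inl (τ a)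
  | Sum.inr (Sum.inr _) => Sum.inr (Sum.inl 0)

section Cross
variable {σ τ : Fin (m+1) → Fin (m+1)}

lemma cross_invol (hσ0 : ∀ a, a ≠ 0 → σ a ≠ 0) (hτ0 : ∀ a, a ≠ 0 → τ a ≠ 0)
    (hτσ : ∀ a, a ≠ 0 → τ (σ a) = a) (hστ : ∀ a, a ≠ 0 → σ (τ a) = a) :
    Function.Involutive (crossFun σ τ) := by
  intro x
  rcases x with a | a | a
  · by_cases ha : a = 0
    · simp [crossFun, ha]
    · simp [crossFun, ha, hσ0 a ha, hτσ a ha]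
  · by_cases ha : a = 0
    · simp [crossFun, ha]
    · simp [crossFun, ha, hτ0 a ha, hστ a ha]
  · simp [crossFun]

lemma cross_adj (hσ0 : ∀ a, a ≠ 0 → σ a ≠ 0) (hτ0 : ∀ a, a ≠ 0 → τ a ≠ 0) :
    ∀ x y : Vm m, (M m).Adj x y → (M m).Adj (crossFun σ τ x) (crossFun σ τ y) := by
  intro x y h
  rcases x with a | a | a <;> rcases y with b | b | b
  · rw [adj_vv_vv] at h
    rcases h.2 with h0 | h0
    · subst h0
      have hb : b ≠ 0 := Ne.symm h.1
      simp only [crossFun, if_pos rfl, if_neg hb]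
      exact adj_of_ne'' (hσ0 b hb)
    · subst h0
      have ha : a ≠ 0 := h.1
      simp only [crossFun, if_pos rfl, if_neg ha]
      exact (adj_of_ne'' (hσ0 a ha)).symm
  · rw [adj_vv_uu] at h
    rcases h.2 with h0 | h0
    · subst h0
      have hb : b ≠ 0 := Ne.symm h.1
      simp only [crossFun, if_pos rfl, if_neg hb]
      exact adj_of_ne (hτ0 b hb)
    · subst h0
      have ha : a ≠ 0 := h.1
      simp only [crossFun, if_pos rfl, if_neg ha]
      exact adj_uu_ww
  · exact absurd h adj_vv_ww
  · rw [adj_uu_vv] at h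
    rcases h.2 with h0 | h0
    · subst h0
      have ha : a ≠ 0 := Ne.symm h.1
      simp only [crossFun, if_pos rfl, if_neg ha]
      exact (adj_of_ne (hτ0 a ha)).symm
    · subst h0
      have hb : b ≠ 0 := h.1
      simp only [crossFun, if_pos rfl, if_neg hb]
      exact SimpleGraph.Adj.symm adj_uu_ww
  · exact absurd h adj_uu_uu
  · by_cases ha : a = 0
    · simp only [crossFun, if_pos ha]
      exact adj_w 0
    · simp only [crossFun, if_neg ha]
      exact adj_vv_uu.2 ⟨hτ0 a ha, Or.inr rfl⟩
  · exact absurd h.symm adj_vv_ww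
  · by_cases hb : b = 0
    · simp only [crossFun, if_pos hb]
      exact adj_uu_ww
    · simp only [crossFun, if_neg hb]
      exact (adj_vv_uu.2 ⟨hτ0 b hb, Or.inr rfl⟩).symm
  · exact absurd h ((M m).irrefl)

/-- the level-swapping automorphism -/
def crossIso (hσ0 : ∀ a, a ≠ 0 → σ a ≠ 0) (hτ0 : ∀ a, a ≠ 0 → τ a ≠ 0)
    (hτσ : ∀ a, a ≠ 0 → τ (σ a) = a) (hστ : ∀ a, a ≠ 0 → σ (τ a) = a) : M m ≃g M m where
  toEquiv := Function.Involutive.toPerm _ (cross_invol hσ0 hτ0 hτσ hστ)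
  map_rel_iff' := by
    intro x y
    constructor
    · intro h
      have h2 := cross_adj hσ0 hτ0 _ _ h
      simp only [Function.Involutive.coe_toPerm] at h2
      rwa [cross_invol hσ0 hτ0 hτσ hστ x, cross_invol hσ0 hτ0 hτσ hστ y] at h2
    · exact cross_adj hσ0 hτ0 x y

lemma crossIso_apply (hσ0 : ∀ a, a ≠ 0 → σ a ≠ 0) (hτ0 : ∀ a, a ≠ 0 → τ a ≠ 0)
    (hτσ : ∀ a, a ≠ 0 → τ (σ a) = a) (hστ : ∀ a, a ≠ 0 → σ (τ a) = a) (x : Vm m) :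
    crossIso hσ0 hτ0 hτσ hστ x = crossFun σ τ x := rfl

end Cross

lemma vSwap_vv {a b : Fin (m+1)} (ha : a ≠ 0) (hb : b ≠ 0) (x : Fin (m+1)) :
    vSwap ha hb (vv x) = vv (Equiv.swap a b x) := rfl
lemma vSwap_uu {a b : Fin (m+1)} (ha : a ≠ 0) (hb : b ≠ 0) (x : Fin (m+1)) :
    vSwap ha hb (uu x) = uu x := rfl
lemma vSwap_ww {a b : Fin (m+1)} (ha : a ≠ 0) (hb : b ≠ 0) :
    vSwap ha hb (ww : Vm m) = ww := rfl
lemma uSwap_vv {a b : Fin (m+1)} (ha : a ≠ 0) (hb : b ≠ 0) (x : Fin (m+1)) :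
    uSwap ha hb (vv x) = vv x := rfl
lemma uSwap_uu {a b : Fin (m+1)} (ha : a ≠ 0) (hb : b ≠ 0) (x : Fin (m+1)) :
    uSwap ha hb (uu x) = uu (Equiv.swap a b x) := rfl
lemma uSwap_ww {a b : Fin (m+1)} (ha : a ≠ 0) (hb : b ≠ 0) :
    uSwap ha hb (ww : Vm m) = ww := rfl

lemma card_nonzero : Fintype.card {a : Fin (m+1) // a ≠ 0} = m := by
  simp [ne_eq, Fintype.card_subtype_compl]

lemma myc_lower (hm : 2 ≤ m) {k : ℕ} (c : (M m).edgeSet → Fin k)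
    (hc : IsDistEdgeColoring (M m) c) : m + 1 ≤ k * k := by
  by_contra hcon
  push_neg at hcon
  have hkk : k * k ≤ m := by omega
  classical
  set pf : {a : Fin (m+1) // a ≠ 0} → Fin k × Fin k := fun a =>
    (c ⟨s(vv 0, vv a.1), adj_of_ne a.2⟩, c ⟨s(uu 0, vv a.1), adj_of_ne' a.2⟩) with hpf
  set qf : {a : Fin (m+1) // a ≠ 0} → Fin k × Fin k := fun a =>
    (c ⟨s(vv 0, uu a.1), adj_of_ne'' a.2⟩, c ⟨s(ww, uu a.1), adj_w a.1⟩) with hqf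
  by_cases hpinj : Function.Injective pf
  · by_cases hqinj : Function.Injective qf
    · -- both injective: cross automorphism
      have hcard2 : Fintype.card (Fin k × Fin k) = k * k := by simp
      have hmle : m ≤ k * k := by
        have := Fintype.card_le_of_injective pf hpinj
        rwa [card_nonzero, hcard2] at this
      have hpbij : Function.Bijective pf :=
        (Fintype.bijective_iff_injective_and_card pf).2 ⟨hpinj, by rw [card_nonzero, hcard2]; omega⟩
      have hqbij : Function.Bijective qf :=
        (Fintype.bijective_iff_injective_and_card qf).2 ⟨hqinj, by rw [card_nonzero, hcard2]; omega⟩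
      set σ : Fin (m+1) → Fin (m+1) := fun x =>
        if hx : x = 0 then 0 else ((hqbij.surjective (pf ⟨x, hx⟩)).choose).1 with hσdef
      set τ : Fin (m+1) → Fin (m+1) := fun x =>
        if hx : x = 0 then 0 else ((hpbij.surjective (qf ⟨x, hx⟩)).choose).1 with hτdef
      have hσ0 : ∀ x, x ≠ 0 → σ x ≠ 0 := by
        intro x hx
        simp only [hσdef, dif_neg hx]
        exact ((hqbij.surjective (pf ⟨x, hx⟩)).choose).2
      have hτ0 : ∀ x, x ≠ 0 → τ x ≠ 0 := by
        intro x hx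
        simp only [hτdef, dif_neg hx]
        exact ((hpbij.surjective (qf ⟨x, hx⟩)).choose).2
      have hqσ : ∀ x (hx : x ≠ 0), qf ⟨σ x, hσ0 x hx⟩ = pf ⟨x, hx⟩ := by
        intro x hx
        have hs := (hqbij.surjective (pf ⟨x, hx⟩)).choose_spec
        have : (⟨σ x, hσ0 x hx⟩ : {a : Fin (m+1) // a ≠ 0})
            = (hqbij.surjective (pf ⟨x, hx⟩)).choose := by
          apply Subtype.ext
          simp only [hσdef, dif_neg hx]
        rw [this, hs]
      have hpτ : ∀ x (hx : x ≠ 0), pf ⟨τ x, hτ0 x hx⟩ = qf ⟨x, hx⟩ := by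
        intro x hx
        have hs := (hpbij.surjective (qf ⟨x, hx⟩)).choose_spec
        have : (⟨τ x, hτ0 x hx⟩ : {a : Fin (m+1) // a ≠ 0})
            = (hpbij.surjective (qf ⟨x, hx⟩)).choose := by
          apply Subtype.ext
          simp only [hτdef, dif_neg hx]
        rw [this, hs]
      have hτσ : ∀ x, x ≠ 0 → τ (σ x) = x := by
        intro x hx
        have h1 : pf ⟨τ (σ x), hτ0 _ (hσ0 x hx)⟩ = pf ⟨x, hx⟩ := by
          rw [hpτ _ (hσ0 x hx), hqσ x hx]
        exact congrArg Subtype.val (hpinj h1)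
      have hστ : ∀ x, x ≠ 0 → σ (τ x) = x := by
        intro x hx
        have h1 : qf ⟨σ (τ x), hσ0 _ (hτ0 x hx)⟩ = qf ⟨x, hx⟩ := by
          rw [hqσ _ (hτ0 x hx), hpτ x hx]
        exact congrArg Subtype.val (hqinj h1)
      set φ := crossIso hσ0 hτ0 hτσ hστ with hφ
      have hφv0 : φ (vv 0) = vv 0 := by
        simp [hφ, crossIso_apply, crossFun]
      have hφv : ∀ x, x ≠ 0 → φ (vv x) = uu (σ x) := by
        intro x hx
        simp [hφ, crossIso_apply, crossFun, hx]
      have hφu0 : φ (uu 0) = ww := by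
        simp [hφ, crossIso_apply, crossFun]
      have hφu : ∀ x, x ≠ 0 → φ (uu x) = vv (τ x) := by
        intro x hx
        simp [hφ, crossIso_apply, crossFun, hx]
      have hφw : φ ww = uu 0 := by
        simp [hφ, crossIso_apply, crossFun]
      have hpres : ∀ e : (M m).edgeSet, c (φ.mapEdgeSet e) = c e := by
        apply check_pres'
        · intro x hx h
          rw [ccongr c (e' := ⟨s(vv 0, uu (σ x)), adj_of_ne'' (hσ0 x hx)⟩)
            (by simp only [hφv0, hφv x hx])]
          exact congrArg Prod.fst (hqσ x hx)
        · intro x hx h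
          rw [ccongr c (e' := ⟨s(ww, uu (σ x)), adj_w _⟩)
            (by simp only [hφu0, hφv x hx])]
          exact congrArg Prod.snd (hqσ x hx)
        · intro x hx h
          rw [ccongr c (e' := ⟨s(vv 0, vv (τ x)), adj_of_ne (hτ0 x hx)⟩)
            (by simp only [hφv0, hφu x hx])]
          exact congrArg Prod.fst (hpτ x hx)
        · intro x h
          by_cases hx : x = 0
          · subst hx
            exact ccongr c (by simp only [hφw, hφu0]; exact Sym2.eq_swap)
          · rw [ccongr c (e' := ⟨s(uu 0, vv (τ x)), adj_of_ne' (hτ0 x hx)⟩)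
              (by simp only [hφw, hφu x hx])]
            exact congrArg Prod.snd (hpτ x hx)
      have := hc φ hpres (uu 0)
      rw [hφu0] at this
      simp at this
    · -- qf not injective: swap two shadow leaves
      obtain ⟨a, b, heq, hne⟩ := Function.not_injective_iff.1 hqinj
      set φ := uSwap a.2 b.2 with hφ
      have hpres : ∀ e : (M m).edgeSet, c (φ.mapEdgeSet e) = c e := by
        apply check_pres'
        · intro x hx h
          exact ccongr c (by simp only [hφ, uSwap_vv])
        · intro x hx h
          exact ccongr c (by simp only [hφ, uSwap_vv, uSwap_uu,
            Equiv.swap_apply_of_ne_of_ne (Ne.symm a.2) (Ne.symm b.2)])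
        · intro x hx h
          rw [ccongr c (e' := ⟨s(vv 0, uu (Equiv.swap a.1 b.1 x)),
              adj_of_ne'' (fun hz => hx ((swap_zero_iff a.2 b.2).1 hz))⟩)
            (by simp only [hφ, uSwap_vv, uSwap_uu])]
          by_cases hxa : x = a.1
          · subst hxa
            simp only [Equiv.swap_apply_left]
            exact (congrArg Prod.fst heq).symm
          by_cases hxb : x = b.1
          · subst hxb
            simp only [Equiv.swap_apply_right]
            exact congrArg Prod.fst heq
          · simp only [Equiv.swap_apply_of_ne_of_ne hxa hxb]
        · intro x h
          rw [ccongr c (e' := ⟨s(ww, uu (Equiv.swap a.1 b.1 x)), adj_w _⟩)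
            (by simp only [hφ, uSwap_ww, uSwap_uu])]
          by_cases hxa : x = a.1
          · subst hxa
            simp only [Equiv.swap_apply_left]
            exact (congrArg Prod.snd heq).symm
          by_cases hxb : x = b.1
          · subst hxb
            simp only [Equiv.swap_apply_right]
            exact congrArg Prod.snd heq
          · simp only [Equiv.swap_apply_of_ne_of_ne hxa hxb]
      have := hc φ hpres (uu a.1)
      rw [hφ, uSwap_uu, Equiv.swap_apply_left] at this
      simp only [uu, Sum.inr.injEq, Sum.inl.injEq] at this
      exact hne (Subtype.ext this.symm ▸ rfl)
  · -- pf not injective: swap two original leaves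
    obtain ⟨a, b, heq, hne⟩ := Function.not_injective_iff.1 hpinj
    set φ := vSwap a.2 b.2 with hφ
    have hpres : ∀ e : (M m).edgeSet, c (φ.mapEdgeSet e) = c e := by
      apply check_pres'
      · intro x hx h
        rw [ccongr c (e' := ⟨s(vv 0, vv (Equiv.swap a.1 b.1 x)),
            adj_of_ne (fun hz => hx ((swap_zero_iff a.2 b.2).1 hz))⟩)
          (by simp only [hφ, vSwap_vv,
            Equiv.swap_apply_of_ne_of_ne (Ne.symm a.2) (Ne.symm b.2)])]
        by_cases hxa : x = a.1
        · subst hxa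
          simp only [Equiv.swap_apply_left]
          exact (congrArg Prod.fst heq).symm
        by_cases hxb : x = b.1
        · subst hxb
          simp only [Equiv.swap_apply_right]
          exact congrArg Prod.fst heq
        · simp only [Equiv.swap_apply_of_ne_of_ne hxa hxb]
      · intro x hx h
        rw [ccongr c (e' := ⟨s(uu 0, vv (Equiv.swap a.1 b.1 x)),
            adj_of_ne' (fun hz => hx ((swap_zero_iff a.2 b.2).1 hz))⟩)
          (by simp only [hφ, vSwap_vv, vSwap_uu])]
        by_cases hxa : x = a.1
        · subst hxa
          simp only [Equiv.swap_apply_left]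
          exact (congrArg Prod.snd heq).symm
        by_cases hxb : x = b.1
        · subst hxb
          simp only [Equiv.swap_apply_right]
          exact congrArg Prod.snd heq
        · simp only [Equiv.swap_apply_of_ne_of_ne hxa hxb]
      · intro x hx h
        exact ccongr c (by simp only [hφ, vSwap_vv, vSwap_uu,
          Equiv.swap_apply_of_ne_of_ne (Ne.symm a.2) (Ne.symm b.2)])
      · intro x h
        exact ccongr c (by simp only [hφ, vSwap_ww, vSwap_uu])
    have := hc φ hpres (vv a.1)
    rw [hφ, vSwap_vv, Equiv.swap_apply_left] at this
    simp only [vv, Sum.inl.injEq] at this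
    exact hne (Subtype.ext this.symm ▸ rfl)


/-! ### The star graph -/

lemma star_edge_rep {x y : Fin (m+1)} (h : (_root_.starGraph m).Adj x y) :
    ∃ a, a ≠ 0 ∧ s(x, y) = s(0, a) := by
  rw [star_adj] at h
  rcases h.2 with h0 | h0
  · exact ⟨y, fun hy => h.1 (h0.trans hy.symm), by rw [h0]⟩
  · exact ⟨x, fun hx => h.1 (hx.trans h0.symm), by rw [h0, Sym2.eq_swap]⟩

lemma star_adj0 {a : Fin (m+1)} (ha : a ≠ 0) : (_root_.starGraph m).Adj 0 a :=
  star_adj.2 ⟨Ne.symm ha, Or.inl rfl⟩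

lemma star_fix0 (hm : 2 ≤ m) (φ : _root_.starGraph m ≃g _root_.starGraph m) : φ 0 = 0 := by
  by_contra h0
  set a1 : Fin (m+1) := ⟨1, by omega⟩ with ha1
  set a2 : Fin (m+1) := ⟨2, by omega⟩ with ha2
  have h10 : a1 ≠ 0 := by simp [ha1, Fin.ext_iff]
  have h20 : a2 ≠ 0 := by simp [ha2, Fin.ext_iff]
  have h12 : a1 ≠ a2 := by simp [ha1, ha2, Fin.ext_iff]
  have k1 : (_root_.starGraph m).Adj (φ 0) (φ a1) := φ.map_adj_iff.2 (star_adj0 h10)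
  have k2 : (_root_.starGraph m).Adj (φ 0) (φ a2) := φ.map_adj_iff.2 (star_adj0 h20)
  rw [star_adj] at k1 k2
  have e1 : φ a1 = 0 := k1.2.resolve_left h0
  have e2 : φ a2 = 0 := k2.2.resolve_left h0
  exact h12 (φ.injective (e1.trans e2.symm))

lemma star_check_pres {α : Type*} (c : (_root_.starGraph m).edgeSet → α) (φ : _root_.starGraph m ≃g _root_.starGraph m)
    (H : ∀ (a : Fin (m+1)) (ha : a ≠ 0) (h : s(φ 0, φ a) ∈ (_root_.starGraph m).edgeSet),
      c ⟨s(φ 0, φ a), h⟩ = c ⟨s(0, a), star_adj0 ha⟩) :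
    ∀ e : (_root_.starGraph m).edgeSet, c (φ.mapEdgeSet e) = c e := by
  rintro ⟨z, hz⟩
  induction z using Sym2.ind with
  | _ x y =>
    have hadj : (_root_.starGraph m).Adj x y := hz
    obtain ⟨a, ha, he⟩ := star_edge_rep hadj
    rw [ccongr c (show ((φ.mapEdgeSet ⟨s(x,y), hz⟩) : (_root_.starGraph m).edgeSet).val
          = s(φ 0, φ a) from by simp [Iso.mapEdgeSet, Hom.mapEdgeSet, he])
          (e' := ⟨_, φ.map_adj_iff.2 (star_adj0 ha)⟩),
      ccongr c (e := ⟨s(x,y), hz⟩) (e' := ⟨_, star_adj0 ha⟩) he]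
    exact H a ha _

/-- transposition automorphism of the star -/
def starSwap {a b : Fin (m+1)} (ha : a ≠ 0) (hb : b ≠ 0) : _root_.starGraph m ≃g _root_.starGraph m where
  toEquiv := Equiv.swap a b
  map_rel_iff' := by
    intro x y
    rw [star_adj, star_adj, ne_eq, EmbeddingLike.apply_eq_iff_eq,
      swap_zero_iff ha hb, swap_zero_iff ha hb]

lemma star_upper (hm : 2 ≤ m) :
    ∃ c : (_root_.starGraph m).edgeSet → Fin m, IsDistEdgeColoring (_root_.starGraph m) c := by
  have hm0 : 0 < m := by omega
  set g : Fin (m+1) → Fin (m+1) → Fin m := fun a b =>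
    if a = 0 then ⟨(b.val - 1) % m, Nat.mod_lt _ hm0⟩
    else if b = 0 then ⟨(a.val - 1) % m, Nat.mod_lt _ hm0⟩ else ⟨0, hm0⟩ with hg
  have hgsymm : ∀ x y, g x y = g y x := by
    intro x y
    by_cases hx : x = 0 <;> by_cases hy : y = 0 <;> simp [hg, hx, hy]
  set c : (_root_.starGraph m).edgeSet → Fin m := fun e => Sym2.lift ⟨g, hgsymm⟩ e.val with hcdef
  refine ⟨c, ?_⟩
  intro φ hcc v
  have h0 := star_fix0 hm φ
  by_cases hv : v = 0
  · rw [hv]; exact h0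
  have hfv : φ v ≠ 0 := fun h => hv (φ.injective (h.trans h0.symm))
  have h2 : (_root_.starGraph m).Adj (φ 0) (φ v) := φ.map_adj_iff.2 (star_adj0 hv)
  have hp := pres_pair hcc (star_adj0 hv) h2
  rw [ccongr c (e' := ⟨s(0, φ v), star_adj0 hfv⟩) (by show s(φ 0, φ v) = s(0, φ v); rw [h0])] at hp
  have hval : ((φ v).val - 1) % m = (v.val - 1) % m := by
    have : g 0 (φ v) = g 0 v := hp
    simp only [hg, if_pos rfl] at this
    exact congrArg Fin.val this
  have b1 : (φ v).val < m + 1 := (φ v).isLt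
  have b2 : v.val < m + 1 := v.isLt
  have n1 : (φ v).val ≠ 0 := fun h => hfv (Fin.ext h)
  have n2 : v.val ≠ 0 := fun h => hv (Fin.ext h)
  rw [Nat.mod_eq_of_lt (by omega), Nat.mod_eq_of_lt (by omega)] at hval
  exact Fin.ext (by omega)

lemma starSwap_apply {a b : Fin (m+1)} (ha : a ≠ 0) (hb : b ≠ 0) (x : Fin (m+1)) :
    starSwap ha hb x = Equiv.swap a b x := rfl

lemma star_lower (hm : 2 ≤ m) {k : ℕ} (c : (_root_.starGraph m).edgeSet → Fin k)
    (hc : IsDistEdgeColoring (_root_.starGraph m) c) : m ≤ k := by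
  by_contra hcon
  push_neg at hcon
  classical
  set pf : {a : Fin (m+1) // a ≠ 0} → Fin k := fun a => c ⟨s(0, a.1), star_adj0 a.2⟩ with hpf
  have hni : ¬ Function.Injective pf := by
    intro hinj
    have := Fintype.card_le_of_injective pf hinj
    rw [card_nonzero, Fintype.card_fin] at this
    omega
  obtain ⟨a, b, heq, hne⟩ := Function.not_injective_iff.1 hni
  set φ := starSwap a.2 b.2 with hφ
  have hpres : ∀ e : (_root_.starGraph m).edgeSet, c (φ.mapEdgeSet e) = c e := by
    apply star_check_pres
    intro x hx h
    rw [ccongr c (e' := ⟨s(0, Equiv.swap a.1 b.1 x),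
        star_adj0 (fun hz => hx ((swap_zero_iff a.2 b.2).1 hz))⟩)
      (by simp only [hφ, starSwap_apply,
        Equiv.swap_apply_of_ne_of_ne (Ne.symm a.2) (Ne.symm b.2)])]
    by_cases hxa : x = a.1
    · subst hxa
      simp only [Equiv.swap_apply_left]
      exact heq.symm
    by_cases hxb : x = b.1
    · subst hxb
      simp only [Equiv.swap_apply_right]
      exact heq
    · simp only [Equiv.swap_apply_of_ne_of_ne hxa hxb]
  have := hc φ hpres a.1
  rw [hφ, starSwap_apply, Equiv.swap_apply_left] at this
  exact hne (Subtype.ext this.symm ▸ rfl)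

end MycStar


theorem distIndex_myc_star (m : ℕ) (hm : 2 ≤ m) :
    distIndex (myc (_root_.starGraph m)) = sInf {r : ℕ | m + 1 ≤ r ^ 2} ∧
      distIndex (myc (_root_.starGraph m)) ≤ m ∧ distIndex (_root_.starGraph m) = m := by
  have hstar : distIndex (_root_.starGraph m) = m := by
    have hmem : m ∈ {k : ℕ | ∃ c : (_root_.starGraph m).edgeSet → Fin k,
        IsDistEdgeColoring (_root_.starGraph m) c} := MycStar.star_upper hm
    have hunfold : distIndex (_root_.starGraph m) = sInf {k : ℕ | ∃ c : (_root_.starGraph m).edgeSet → Fin k,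
        IsDistEdgeColoring (_root_.starGraph m) c} := rfl
    rw [hunfold]
    refine le_antisymm (Nat.sInf_le hmem) ?_
    obtain ⟨c, hcd⟩ := Nat.sInf_mem (⟨m, hmem⟩ : Set.Nonempty _)
    exact MycStar.star_lower hm c hcd
  have hmT : m ∈ {r : ℕ | m + 1 ≤ r ^ 2} := by
    simp only [Set.mem_setOf_eq, pow_two]
    nlinarith
  have hr0T : m + 1 ≤ (sInf {r : ℕ | m + 1 ≤ r ^ 2}) ^ 2 := Nat.sInf_mem ⟨m, hmT⟩
  have hmemS : sInf {r : ℕ | m + 1 ≤ r ^ 2} ∈ {k : ℕ |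
      ∃ c : (myc (_root_.starGraph m)).edgeSet → Fin k, IsDistEdgeColoring (myc (_root_.starGraph m)) c} :=
    MycStar.myc_upper hm (by rw [pow_two] at hr0T; exact hr0T)
  have hunfold : distIndex (myc (_root_.starGraph m)) = sInf {k : ℕ |
      ∃ c : (myc (_root_.starGraph m)).edgeSet → Fin k, IsDistEdgeColoring (myc (_root_.starGraph m)) c} := rfl
  have hS1 : distIndex (myc (_root_.starGraph m)) ≤ sInf {r : ℕ | m + 1 ≤ r ^ 2} := by
    rw [hunfold]
    exact Nat.sInf_le hmemS
  have hS2 : sInf {r : ℕ | m + 1 ≤ r ^ 2} ≤ distIndex (myc (_root_.starGraph m)) := by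
    rw [hunfold]
    obtain ⟨c, hcd⟩ := Nat.sInf_mem (⟨_, hmemS⟩ : Set.Nonempty _)
    have hlow := MycStar.myc_lower hm c hcd
    exact Nat.sInf_le (by simp only [Set.mem_setOf_eq, pow_two]; exact hlow)
  refine ⟨le_antisymm hS1 hS2, ?_, hstar⟩
  exact le_trans hS1 (Nat.sInf_le hmT)
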